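/- As x → ∞, ∑_{n ≤ x} ω(s(n)) = #{(n, p) : 1 ≤ n ≤ x, p prime, log₂ x < p ≤ x^{1/√(log₂ x)}, p divides s(n)} + o(x log₂ x); that is, the absolute difference between the two quantities, divided by x log₂ x, tends to 0. -/

import Mathlib

open Classical Finset

/-- Sum of the divisors of `n` (with `σ(0) = 0`). -/
def sigmaFn (n : ℕ) : ℕ := ∑ d ∈ n.divisors, d

/-- Sum of the proper divisors of `n`. -/
def s (n : ℕ) : ℕ := sigmaFn n - n

/-- The number of distinct prime factors, with `ω(0) = ω(1) = 0`. -/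
def omegaFn (n : ℕ) : ℕ := n.primeFactors.card

/-- The number of prime factors counted with multiplicity, `Ω(0) = Ω(1) = 0`. -/
def bigOmegaFn (n : ℕ) : ℕ := n.primeFactorsList.length

/-- `log₁ x = max 1 (log x)`. -/
noncomputable def log1 (x : ℝ) : ℝ := max 1 (Real.log x)
noncomputable def log2 (x : ℝ) : ℝ := log1 (log1 x)
noncomputable def log3 (x : ℝ) : ℝ := log1 (log2 x)
noncomputable def log4 (x : ℝ) : ℝ := log1 (log3 x)

/-- The largest prime factor of `n`, with `P(1) = 1`. -/
def P (n : ℕ) : ℕ := max 1 (n.primeFactors.sup id)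

/-- The second-largest prime factor of `n` (with multiplicity), `P₂(1) = 1`,
`P₂(p) = 1` for `p` prime. -/
def P2 (n : ℕ) : ℕ := P (n / P n)

/-- The conjunction of conditions A–F; `n ∈ E(x)` iff one of them fails. -/
def EProp (x : ℝ) (n : ℕ) : Prop :=
  (P n : ℝ) > x ^ (1 / log3 x) ∧
  ¬ (P n) ^ 2 ∣ n ∧
  (P2 n : ℝ) > x ^ (1 / log3 x) ∧
  (P2 n : ℝ) < x * (P n : ℝ) / (2 * (n : ℝ)) ∧
  ¬ (P2 n) ^ 2 ∣ n ∧
  ∀ q : ℕ, q.Prime → q ∣ Nat.gcd (n / P n) (sigmaFn (n / P n)) → (q : ℝ) < log2 x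

/-- The exceptional set `E(x)`. -/
noncomputable def E (x : ℝ) : Finset ℕ :=
  (Finset.Icc 1 ⌊x⌋₊).filter fun n => ¬ EProp x n

lemma sigmaFn_le_sq (n : ℕ) : sigmaFn n ≤ n ^ 2 := by
  unfold sigmaFn
  calc ∑ d ∈ n.divisors, d ≤ ∑ _d ∈ n.divisors, n :=
        Finset.sum_le_sum (fun d hd => Nat.divisor_le hd)
    _ = n.divisors.card * n := by rw [Finset.sum_const, smul_eq_mul]
    _ ≤ n * n := by
        refine Nat.mul_le_mul_right n ?_
        calc n.divisors.card ≤ (Finset.Ico 1 (n+1)).card :=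
              Finset.card_le_card (Finset.filter_subset _ _)
          _ = n := by simp
    _ = n ^ 2 := (sq n).symm

lemma one_le_s {n : ℕ} (hn : 2 ≤ n) : 1 ≤ s n := by
  have hsub : ({1, n} : Finset ℕ) ⊆ n.divisors := by
    intro d hd
    simp only [Finset.mem_insert, Finset.mem_singleton] at hd
    rcases hd with rfl | rfl <;> simp [Nat.mem_divisors] <;> omega
  have h := Finset.sum_le_sum_of_subset (f := fun d => d) hsub
  rw [Finset.sum_pair (by omega : (1:ℕ) ≠ n)] at h
  have h' : 1 + n ≤ sigmaFn n := h
  unfold s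
  omega

-- Chebyshev-type bound
lemma cheb (m : ℕ) (hm : 2 ≤ m) :
    (((Finset.range (m+1)).filter Nat.Prime).card : ℝ) ≤
      2 * Real.sqrt m + 6 * m / Real.log m := by
  set F := (Finset.range (m+1)).filter Nat.Prime with hF
  set k := Nat.sqrt m with hk
  have hm1 : (1:ℝ) ≤ Real.sqrt m := by
    rw [show (1:ℝ) = Real.sqrt 1 by simp]
    refine Real.sqrt_le_sqrt ?_
    exact_mod_cast Nat.one_le_iff_ne_zero.mpr (by omega)
  have hkr : (k : ℝ) ≤ Real.sqrt m := by
    have h2 : (k:ℝ) ^ 2 ≤ (m:ℝ) := by exact_mod_cast Nat.sqrt_le' m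
    nlinarith [Real.sq_sqrt (show (0:ℝ) ≤ (m:ℝ) by positivity), Real.sqrt_nonneg (m:ℝ)]
  have hksucc : Real.sqrt m < (k:ℝ) + 1 := by
    rw [Real.sqrt_lt' (by positivity)]
    push_cast
    have := Nat.lt_succ_sqrt' m
    exact_mod_cast this
  have hlogm : 0 < Real.log m := Real.log_pos (by exact_mod_cast hm)
  -- small part
  have hsmall : ((F.filter (fun p => p ≤ k)).card : ℝ) ≤ 2 * Real.sqrt m := by
    have hsub : F.filter (fun p => p ≤ k) ⊆ Finset.range (k+1) := by
      intro p hp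
      simp only [Finset.mem_filter, Finset.mem_range] at hp ⊢
      omega
    have := Finset.card_le_card hsub
    rw [Finset.card_range] at this
    calc ((F.filter (fun p => p ≤ k)).card : ℝ) ≤ (k:ℝ) + 1 := by exact_mod_cast this
      _ ≤ Real.sqrt m + Real.sqrt m := by linarith
      _ = 2 * Real.sqrt m := by ring
  -- big part
  set S := F.filter (fun p => ¬ p ≤ k) with hS
  have hprod_dvd : ∏ p ∈ S, p ∣ primorial m :=
    Finset.prod_dvd_prod_of_subset S F id (Finset.filter_subset _ _)
  have hprod_le : ∏ p ∈ S, p ≤ 4 ^ m :=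
    (Nat.le_of_dvd (primorial_pos m) hprod_dvd).trans (primorial_le_4_pow m)
  have hpow : Real.sqrt m ^ S.card ≤ (4:ℝ) ^ m := by
    calc Real.sqrt m ^ S.card = ∏ _p ∈ S, Real.sqrt m := by rw [Finset.prod_const]
      _ ≤ ∏ p ∈ S, (p:ℝ) := by
          refine Finset.prod_le_prod (fun _ _ => Real.sqrt_nonneg m) ?_
          intro p hp
          simp only [hS, Finset.mem_filter, not_le] at hp
          have : (k:ℝ) + 1 ≤ (p:ℝ) := by exact_mod_cast hp.2
          linarith
      _ = ((∏ p ∈ S, p : ℕ) : ℝ) := by push_cast; rfl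
      _ ≤ ((4:ℕ) ^ m : ℕ) := by exact_mod_cast hprod_le
      _ = (4:ℝ) ^ m := by push_cast; rfl
  have hbig : ((S.card : ℝ)) ≤ 6 * m / Real.log m := by
    have hlog := Real.log_le_log (by positivity) hpow
    rw [Real.log_pow, Real.log_pow, Real.log_sqrt (by positivity)] at hlog
    have hlog4 : Real.log 4 ≤ 3/2 := by
      rw [show (4:ℝ) = 2^2 by norm_num, Real.log_pow]
      have := Real.log_two_lt_d9
      push_cast
      linarith
    rw [le_div_iff₀ hlogm]
    have h1 : (S.card : ℝ) * (Real.log m / 2) ≤ (m:ℝ) * (3/2) := by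
      calc (S.card : ℝ) * (Real.log m / 2) ≤ (m:ℝ) * Real.log 4 := hlog
        _ ≤ (m:ℝ) * (3/2) := by
            have : (0:ℝ) ≤ m := by positivity
            nlinarith
    nlinarith
  have hcard : F.card = (F.filter (fun p => p ≤ k)).card + S.card := by
    rw [hS]
    exact (Finset.card_filter_add_card_filter_not _).symm
  rw [hcard]
  push_cast
  linarith


set_option maxHeartbeats 2000000

/-- `∑_{n ≤ x} ω(s(n))` equals the number of pairs `(n, p)` with
`n ≤ x`, `p` prime, `log₂ x < p ≤ x^{1/√(log₂ x)}`, `p ∣ s(n)`, up to `o(x log₂ x)`. -/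
theorem stmt6 : ∀ δ > (0 : ℝ), ∃ x₀ : ℝ, ∀ x ≥ x₀,
    |(∑ n ∈ Finset.Icc 1 ⌊x⌋₊, (omegaFn (s n) : ℝ)) -
      ((((Finset.Icc 1 ⌊x⌋₊) ×ˢ
          (Finset.Icc 1 ⌊x ^ (1 / Real.sqrt (log2 x))⌋₊)).filter fun np =>
            np.2.Prime ∧ log2 x < (np.2 : ℝ) ∧
            (np.2 : ℝ) ≤ x ^ (1 / Real.sqrt (log2 x)) ∧ np.2 ∣ s np.1).card : ℝ)| ≤
      δ * (x * log2 x) := by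
  intro δ hδ
  set T : ℝ := max 9 (max ((16/δ)^2) (Real.exp (48/δ))) with hTdef
  have hT9 : (9:ℝ) ≤ T := le_max_left _ _
  refine ⟨max (Real.exp (Real.exp T)) (max 16 ((2/δ)^2)), fun x hx => ?_⟩
  have hx16 : (16:ℝ) ≤ x := le_trans (le_trans (le_max_left _ _) (le_max_right _ _)) hx
  have hxd : (2/δ)^2 ≤ x := le_trans (le_trans (le_max_right _ _) (le_max_right _ _)) hx
  have hxe : Real.exp (Real.exp T) ≤ x := le_trans (le_max_left _ _) hx
  have hx0 : (0:ℝ) < x := by linarith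
  have hx1 : (1:ℝ) ≤ x := by linarith
  -- log x ≥ exp T
  have hlogx : Real.exp T ≤ Real.log x := (Real.le_log_iff_exp_le hx0).2 hxe
  have hexpT1 : (1:ℝ) ≤ Real.exp T := Real.one_le_exp (by linarith)
  have hlogx1 : 1 ≤ Real.log x := le_trans hexpT1 hlogx
  set L : ℝ := log2 x with hLdef
  have hLeq : L = Real.log (Real.log x) := by
    rw [hLdef]
    unfold log2 log1
    rw [max_eq_right hlogx1, max_eq_right]
    calc (1:ℝ) ≤ T := by linarith
      _ = Real.log (Real.exp T) := (Real.log_exp T).symm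
      _ ≤ Real.log (Real.log x) := Real.log_le_log (Real.exp_pos T) hlogx
  have hLT : T ≤ L := by
    rw [hLeq]
    calc T = Real.log (Real.exp T) := (Real.log_exp T).symm
      _ ≤ Real.log (Real.log x) := Real.log_le_log (Real.exp_pos T) hlogx
  have hL9 : (9:ℝ) ≤ L := le_trans hT9 hLT
  have hL0 : (0:ℝ) < L := by linarith
  have hsqL3 : (3:ℝ) ≤ Real.sqrt L := by
    rw [show (3:ℝ) = Real.sqrt 9 by rw [show (9:ℝ) = 3^2 by norm_num, Real.sqrt_sq]; norm_num]
    exact Real.sqrt_le_sqrt hL9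
  have hsqL0 : (0:ℝ) < Real.sqrt L := by linarith
  have hsqLδ : 16/δ ≤ Real.sqrt L := by
    have h1 : (16/δ)^2 ≤ L := le_trans (le_trans (le_max_left _ _) (le_max_right _ _)) hLT
    have := Real.sqrt_le_sqrt h1
    rwa [Real.sqrt_sq (by positivity)] at this
  have hlogLδ : 48/δ ≤ Real.log L := by
    have h1 : Real.exp (48/δ) ≤ L := le_trans (le_trans (le_max_right _ _) (le_max_right _ _)) hLT
    exact (Real.le_log_iff_exp_le hL0).2 h1
  have hlogL0 : 0 < Real.log L := lt_of_lt_of_le (by positivity) hlogLδ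
  set X : ℝ := x ^ (1 / Real.sqrt L) with hXdef
  have hX1 : (1:ℝ) < X := by
    rw [hXdef]
    rw [Real.one_lt_rpow_iff_of_pos hx0]
    left; constructor
    · linarith
    · positivity
  have hX0 : (0:ℝ) ≤ X := by linarith
  have hXle : X ≤ Real.sqrt x := by
    have h1 : x ^ (1/Real.sqrt L) ≤ x ^ ((1:ℝ)/2) :=
      Real.rpow_le_rpow_of_exponent_le hx1
        (by rw [div_le_div_iff₀ hsqL0 (by norm_num)]; linarith)
    rw [← Real.sqrt_eq_rpow] at h1
    exact h1
  have hsqxδ : 2/δ ≤ Real.sqrt x := by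
    have := Real.sqrt_le_sqrt hxd
    rwa [Real.sqrt_sq (by positivity)] at this
  have hsqx_sq : Real.sqrt x * Real.sqrt x = x := Real.mul_self_sqrt (le_of_lt hx0)
  have hXδx : X ≤ δ/2 * x := by
    have h2 : 0 < Real.sqrt x := Real.sqrt_pos.2 hx0
    have h3 : (2/δ) * Real.sqrt x ≤ x := by nlinarith
    have h4 : Real.sqrt x = (δ/2) * ((2/δ) * Real.sqrt x) := by field_simp
    calc X ≤ Real.sqrt x := hXle
      _ = (δ/2) * ((2/δ) * Real.sqrt x) := h4
      _ ≤ (δ/2) * x := by nlinarith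

  set N := ⌊x⌋₊ with hNdef
  set M := ⌊X⌋₊ with hMdef
  have hN1 : 1 ≤ N := Nat.le_floor (by exact_mod_cast hx1)
  have hNx : (N:ℝ) ≤ x := Nat.floor_le (le_of_lt hx0)
  have hMX : (M:ℝ) ≤ X := Nat.floor_le hX0
  set c : ℕ → ℕ := fun n =>
    ((Finset.Icc 1 M).filter fun p : ℕ => p.Prime ∧ L < (p:ℝ) ∧ (p:ℝ) ≤ X ∧ p ∣ s n).card
    with hcdef
  have hBnat : ((((Finset.Icc 1 N) ×ˢ (Finset.Icc 1 M)).filter fun np =>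
      np.2.Prime ∧ L < (np.2 : ℝ) ∧ (np.2 : ℝ) ≤ X ∧ np.2 ∣ s np.1).card)
      = ∑ n ∈ Finset.Icc 1 N, c n := by
    rw [Finset.card_filter, Finset.sum_product]
    refine Finset.sum_congr rfl fun n _ => ?_
    simp only [hcdef]
    rw [Finset.card_filter]
  -- n = 1 facts
  have hs1 : s 1 = 0 := by unfold s sigmaFn; simp
  have hω1 : omegaFn (s 1) = 0 := by rw [hs1]; unfold omegaFn; simp
  have hc1 : (c 1 : ℝ) ≤ δ/2 * x := by
    have h1 : c 1 ≤ (Finset.Icc 1 M).card := Finset.card_le_card (Finset.filter_subset _ _)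
    have h2 : (Finset.Icc 1 M).card = M := by rw [Nat.card_Icc]; omega
    have h3 : (c 1 : ℝ) ≤ (M : ℝ) := by exact_mod_cast h1.trans (le_of_eq h2)
    calc (c 1 : ℝ) ≤ (M:ℝ) := h3
      _ ≤ X := hMX
      _ ≤ δ/2 * x := hXδx
  -- per-n bound for 2 ≤ n ≤ N
  have key : ∀ n ∈ Finset.Icc 2 N, |(omegaFn (s n) : ℝ) - (c n : ℝ)| ≤ δ/2 * L := by
    intro n hn
    rw [Finset.mem_Icc] at hn
    have hs0 : s n ≠ 0 := Nat.one_le_iff_ne_zero.mp (one_le_s hn.1)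
    set pf := (s n).primeFactors with hpf
    have hc_le : c n ≤ pf.card := by
      refine Finset.card_le_card ?_
      intro p hp
      simp only [hcdef, Finset.mem_filter] at hp
      exact Nat.mem_primeFactors.2 ⟨hp.2.1, hp.2.2.2.2, hs0⟩
    have hsplit : pf.card ≤ c n + ((pf.filter fun p : ℕ => (p:ℝ) ≤ L).card
        + (pf.filter fun p : ℕ => X < (p:ℝ)).card) := by
      have hsub : pf ⊆ (pf.filter fun p : ℕ => L < (p:ℝ) ∧ (p:ℝ) ≤ X)
          ∪ ((pf.filter fun p : ℕ => (p:ℝ) ≤ L) ∪ (pf.filter fun p : ℕ => X < (p:ℝ))) := by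
        intro p hp
        simp only [Finset.mem_union, Finset.mem_filter]
        rcases le_or_gt (p:ℝ) L with h | h
        · exact Or.inr (Or.inl ⟨hp, h⟩)
        · rcases le_or_gt (p:ℝ) X with h' | h'
          · exact Or.inl ⟨hp, h, h'⟩
          · exact Or.inr (Or.inr ⟨hp, h'⟩)
      have hmid : (pf.filter fun p : ℕ => L < (p:ℝ) ∧ (p:ℝ) ≤ X)
          ⊆ (Finset.Icc 1 M).filter fun p : ℕ => p.Prime ∧ L < (p:ℝ) ∧ (p:ℝ) ≤ X ∧ p ∣ s n := by
        intro p hp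
        simp only [Finset.mem_filter] at hp ⊢
        obtain ⟨hppf, hL, hX⟩ := hp
        obtain ⟨hprime, hdvd, _⟩ := Nat.mem_primeFactors.1 hppf
        refine ⟨Finset.mem_Icc.2 ⟨hprime.one_lt.le.trans' (by norm_num), Nat.le_floor hX⟩,
          hprime, hL, hX, hdvd⟩
      calc pf.card ≤ ((pf.filter fun p : ℕ => L < (p:ℝ) ∧ (p:ℝ) ≤ X)
            ∪ ((pf.filter fun p : ℕ => (p:ℝ) ≤ L) ∪ (pf.filter fun p : ℕ => X < (p:ℝ)))).card :=
            Finset.card_le_card hsub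
        _ ≤ (pf.filter fun p : ℕ => L < (p:ℝ) ∧ (p:ℝ) ≤ X).card
            + ((pf.filter fun p : ℕ => (p:ℝ) ≤ L) ∪ (pf.filter fun p : ℕ => X < (p:ℝ))).card :=
            Finset.card_union_le _ _
        _ ≤ c n + ((pf.filter fun p : ℕ => (p:ℝ) ≤ L).card
            + (pf.filter fun p : ℕ => X < (p:ℝ)).card) := by
            have h1 := Finset.card_le_card hmid
            have h2 := Finset.card_union_le (pf.filter fun p : ℕ => (p:ℝ) ≤ L)
              (pf.filter fun p : ℕ => X < (p:ℝ))
            simp only [hcdef]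
            omega
    -- small primes bound
    have hFs : ((pf.filter fun p : ℕ => (p:ℝ) ≤ L).card : ℝ)
        ≤ 2 * Real.sqrt L + 12 * L / Real.log L := by
      set m := ⌊L⌋₊ with hm
      have hm2 : 2 ≤ m := Nat.le_floor (by exact_mod_cast (show (2:ℝ) ≤ L by linarith))
      have hsub : (pf.filter fun p : ℕ => (p:ℝ) ≤ L) ⊆ (Finset.range (m+1)).filter Nat.Prime := by
        intro p hp
        simp only [Finset.mem_filter, Finset.mem_range] at hp ⊢
        refine ⟨?_, (Nat.mem_primeFactors.1 hp.1).1⟩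
        have : p ≤ m := Nat.le_floor hp.2
        omega
      have h1 := cheb m hm2
      have hcard : ((pf.filter fun p : ℕ => (p:ℝ) ≤ L).card : ℝ)
          ≤ (((Finset.range (m+1)).filter Nat.Prime).card : ℝ) := by
        exact_mod_cast Finset.card_le_card hsub
      have hmL : (m:ℝ) ≤ L := Nat.floor_le hL0.le
      have hmge : L/3 ≤ (m:ℝ) := by
        have := Nat.sub_one_lt_floor L
        linarith
      have hsqm : Real.sqrt m ≤ Real.sqrt L := Real.sqrt_le_sqrt hmL
      have hlogm : Real.log L / 2 ≤ Real.log m := by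
        have h2 : Real.sqrt L ≤ L/3 := by nlinarith [Real.sq_sqrt hL0.le]
        have h3 : Real.sqrt L ≤ (m:ℝ) := le_trans h2 hmge
        calc Real.log L / 2 = Real.log (Real.sqrt L) := (Real.log_sqrt hL0.le).symm
          _ ≤ Real.log m := Real.log_le_log (by positivity) h3
      have hlogm0 : 0 < Real.log m := by linarith
      have h6 : 6 * (m:ℝ) / Real.log m ≤ 12 * L / Real.log L := by
        rw [div_le_div_iff₀ hlogm0 hlogL0]
        nlinarith [mul_le_mul_of_nonneg_left hlogm (by linarith : (0:ℝ) ≤ 12 * L),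
          mul_le_mul_of_nonneg_right hmL hlogL0.le]
      calc ((pf.filter fun p : ℕ => (p:ℝ) ≤ L).card : ℝ)
          ≤ 2 * Real.sqrt m + 6 * m / Real.log m := le_trans hcard h1
        _ ≤ 2 * Real.sqrt L + 12 * L / Real.log L := by linarith
    -- big primes bound
    have hFb : ((pf.filter fun p : ℕ => X < (p:ℝ)).card : ℝ) ≤ 2 * Real.sqrt L := by
      set Fb := pf.filter fun p : ℕ => X < (p:ℝ) with hFbdef
      have hdvd : ∏ p ∈ Fb, p ∣ s n :=
        dvd_trans (Finset.prod_dvd_prod_of_subset Fb pf id (Finset.filter_subset _ _))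
          (Nat.prod_primeFactors_dvd (s n))
      have hle : ∏ p ∈ Fb, p ≤ s n := Nat.le_of_dvd (Nat.pos_of_ne_zero hs0) hdvd
      have hsnx : ((s n : ℕ) : ℝ) ≤ x^2 := by
        have h1 : s n ≤ n^2 := le_trans (Nat.sub_le _ _) (sigmaFn_le_sq n)
        have h2 : (n:ℝ) ≤ x := by
          have : (n:ℝ) ≤ (N:ℝ) := by exact_mod_cast hn.2
          linarith
        have h0 : (0:ℝ) ≤ (n:ℝ) := by positivity
        calc ((s n : ℕ):ℝ) ≤ ((n^2 : ℕ):ℝ) := by exact_mod_cast h1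
          _ = (n:ℝ)^2 := by push_cast; ring
          _ ≤ x^2 := by nlinarith
      have hpow : X ^ Fb.card ≤ x^2 := by
        calc X ^ Fb.card = ∏ _p ∈ Fb, X := (Finset.prod_const X).symm
          _ ≤ ∏ p ∈ Fb, (p:ℝ) :=
            Finset.prod_le_prod (fun _ _ => hX0)
              (fun p hp => le_of_lt (Finset.mem_filter.1 hp).2)
          _ = ((∏ p ∈ Fb, p : ℕ):ℝ) := by push_cast; rfl
          _ ≤ ((s n : ℕ):ℝ) := by exact_mod_cast hle
          _ ≤ x^2 := hsnx
      have hlogx0 : 0 < Real.log x := by linarith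
      have hlog := Real.log_le_log (by positivity) hpow
      rw [Real.log_pow, Real.log_pow] at hlog
      have hlogX : Real.log X = Real.log x / Real.sqrt L := by
        rw [hXdef, Real.log_rpow hx0]; ring
      rw [hlogX] at hlog
      have h5 := mul_le_mul_of_nonneg_right hlog hsqL0.le
      have h6 : (Fb.card : ℝ) * Real.log x ≤ 2 * Real.sqrt L * Real.log x := by
        have hne : Real.sqrt L ≠ 0 := ne_of_gt hsqL0
        field_simp at h5
        push_cast at h5 ⊢
        nlinarith [h5]
      exact le_of_mul_le_mul_right (by linarith) hlogx0
    -- combine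
    have hA : (c n : ℝ) ≤ (omegaFn (s n) : ℝ) := by
      unfold omegaFn; exact_mod_cast hc_le
    have hB : (omegaFn (s n) : ℝ) ≤ (c n : ℝ)
        + (((pf.filter fun p : ℕ => (p:ℝ) ≤ L).card : ℝ)
          + ((pf.filter fun p : ℕ => X < (p:ℝ)).card : ℝ)) := by
      unfold omegaFn; exact_mod_cast hsplit
    have h16 : 16 ≤ δ * Real.sqrt L := by
      rw [div_le_iff₀ hδ] at hsqLδ; linarith
    have h48 : 48 ≤ δ * Real.log L := by
      rw [div_le_iff₀ hδ] at hlogLδ; linarith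
    have hb1 : 4 * Real.sqrt L ≤ δ/4 * L := by
      nlinarith [Real.sq_sqrt hL0.le, hsqL0.le,
        mul_le_mul_of_nonneg_right h16 hsqL0.le]
    have hb2 : 12 * L / Real.log L ≤ δ/4 * L := by
      rw [div_le_iff₀ hlogL0]
      nlinarith [mul_nonneg (sub_nonneg.2 h48) hL0.le]
    rw [abs_sub_le_iff]
    constructor
    · linarith
    · linarith
  -- assemble
  rw [hBnat]
  push_cast
  rw [← Finset.sum_sub_distrib]
  have hIcc : Finset.Icc 1 N = insert 1 (Finset.Icc 2 N) := by
    ext a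
    simp only [Finset.mem_Icc, Finset.mem_insert]
    omega
  have h1notin : (1:ℕ) ∉ Finset.Icc 2 N := by simp
  calc |∑ n ∈ Finset.Icc 1 N, ((omegaFn (s n):ℝ) - (c n : ℝ))|
      ≤ ∑ n ∈ Finset.Icc 1 N, |(omegaFn (s n):ℝ) - (c n : ℝ)| :=
        Finset.abs_sum_le_sum_abs _ _
    _ = |(omegaFn (s 1):ℝ) - (c 1 : ℝ)|
        + ∑ n ∈ Finset.Icc 2 N, |(omegaFn (s n):ℝ) - (c n : ℝ)| := by
        rw [hIcc, Finset.sum_insert h1notin]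
    _ ≤ δ/2 * x + (Finset.Icc 2 N).card • (δ/2 * L) := by
        refine add_le_add ?_ (Finset.sum_le_card_nsmul _ _ _ key)
        rw [hω1]
        simp only [Nat.cast_zero, zero_sub, abs_neg,
          abs_of_nonneg (by positivity : (0:ℝ) ≤ (c 1:ℝ))]
        exact hc1
    _ ≤ δ/2 * x + x * (δ/2 * L) := by
        refine add_le_add le_rfl ?_
        rw [nsmul_eq_mul]
        have hcard : ((Finset.Icc 2 N).card : ℝ) ≤ x := by
          rw [Nat.card_Icc]
          have h9 : N + 1 - 2 ≤ N := by omega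
          have h10 : ((N + 1 - 2 : ℕ) : ℝ) ≤ (N:ℝ) := by exact_mod_cast h9
          linarith
        have hpos : (0:ℝ) ≤ δ/2 * L := by positivity
        nlinarith
    _ ≤ δ * (x * L) := by
        have hL1 : (1:ℝ) ≤ L := by linarith
        nlinarith
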